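/- Let A = ι(a₁)⋯ι(a_r) and B = ι(b₁)⋯ι(b_s) be invertible blades in Cl(Q) such that the span of {a₁,…,a_r} is contained in the span of {b₁,…,b_s} (so that A·B = A ⌟ B). Then for every vector x ∈ M, P_{A·B}(ι x) = P_B(ι x) - P_A(ι x), where P_C(X) = (1/2)·(X - α(C)·X·C⁻¹). -/

import Mathlib

open CliffordAlgebra

section Aux

variable {K M : Type*} [Field K] [AddCommGroup M] [Module K M] {Q : QuadraticForm K M}

lemma ι_anticomm {c x : M} (h : QuadraticMap.polar Q c x = 0) :
    ι Q c * ι Q x = -(ι Q x * ι Q c) := by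
  have h2 := ι_mul_ι_add_swap (Q := Q) c x
  rw [h, map_zero] at h2
  exact eq_neg_of_add_eq_zero_left h2

lemma involute_prod_mul_ι (l : List M) (x : M)
    (h : ∀ m ∈ l, QuadraticMap.polar Q m x = 0) :
    involute ((l.map (ι Q)).prod) * ι Q x = ι Q x * (l.map (ι Q)).prod := by
  induction l with
  | nil => simp
  | cons c t ih =>
    have hct := ι_anticomm (h c List.mem_cons_self)
    have ih' := ih (fun m hm => h m (List.mem_cons_of_mem _ hm))
    simp only [List.map_cons, List.prod_cons, map_mul, involute_ι]
    calc -ι Q c * involute ((t.map (ι Q)).prod) * ι Q x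
        = -(ι Q c * (involute ((t.map (ι Q)).prod) * ι Q x)) := by noncomm_ring
      _ = -(ι Q c * (ι Q x * (t.map (ι Q)).prod)) := by rw [ih']
      _ = -(ι Q c * ι Q x) * (t.map (ι Q)).prod := by noncomm_ring
      _ = ι Q x * ι Q c * (t.map (ι Q)).prod := by rw [hct, neg_neg]
      _ = ι Q x * (ι Q c * (t.map (ι Q)).prod) := by rw [mul_assoc]

lemma single_reflect (c x : M) (hc : Q c ≠ 0) :
    -ι Q c * ι Q x * ((Q c)⁻¹ • ι Q c)
      = ι Q (x - ((Q c)⁻¹ * QuadraticMap.polar Q c x) • c) := by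
  have key : ι Q c * ι Q x * ι Q c
      = QuadraticMap.polar Q c x • ι Q c - Q c • ι Q x := by
    rw [ι_mul_ι_comm, sub_mul, mul_assoc, ι_sq_scalar, ← Algebra.commutes,
      ← Algebra.smul_def, ← Algebra.smul_def]
  rw [mul_smul_comm, neg_mul, neg_mul, key, neg_sub, smul_sub, smul_smul, smul_smul,
    inv_mul_cancel₀ hc, one_smul, map_sub, map_smul]

lemma blade_reflect (l : List M) (hl : l.Pairwise fun u v => QuadraticMap.polar Q u v = 0)
    (hQ : ∀ m ∈ l, Q m ≠ 0) (x : M) :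
    ∃ (x' : M) (u : CliffordAlgebra Q),
      (l.map (ι Q)).prod * u = 1 ∧ u * (l.map (ι Q)).prod = 1 ∧
      involute ((l.map (ι Q)).prod) * ι Q x * u = ι Q x' ∧
      x - x' ∈ Submodule.span K {m | m ∈ l} ∧
      ∀ m ∈ l, QuadraticMap.polar Q m (x + x') = 0 := by
  induction l generalizing x with
  | nil =>
    refine ⟨x, 1, by simp, by simp, by simp, by simp, by simp⟩
  | cons c t ih =>
    obtain ⟨x₁, u₁, hu1, hu2, href, hsp, hor⟩ :=
      ih hl.of_cons (fun m hm => hQ m (List.mem_cons_of_mem _ hm)) x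
    have hc : Q c ≠ 0 := hQ c List.mem_cons_self
    have hcort : ∀ m ∈ t, QuadraticMap.polar Q c m = 0 := by
      simpa using (List.pairwise_cons.mp hl).1
    set k := (Q c)⁻¹ * QuadraticMap.polar Q c x₁ with hk
    refine ⟨x₁ - k • c, u₁ * ((Q c)⁻¹ • ι Q c), ?_, ?_, ?_, ?_, ?_⟩
    · simp only [List.map_cons, List.prod_cons]
      calc ι Q c * (t.map (ι Q)).prod * (u₁ * ((Q c)⁻¹ • ι Q c))
          = ι Q c * ((t.map (ι Q)).prod * u₁) * ((Q c)⁻¹ • ι Q c) := by noncomm_ring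
        _ = (Q c)⁻¹ • (ι Q c * ι Q c) := by rw [hu1]; simp [mul_smul_comm]
        _ = 1 := by rw [ι_sq_scalar, Algebra.smul_def, ← map_mul, inv_mul_cancel₀ hc, map_one]
    · simp only [List.map_cons, List.prod_cons]
      calc u₁ * ((Q c)⁻¹ • ι Q c) * (ι Q c * (t.map (ι Q)).prod)
          = u₁ * ((Q c)⁻¹ • (ι Q c * ι Q c)) * (t.map (ι Q)).prod := by
            simp only [smul_mul_assoc, mul_smul_comm]; noncomm_ring
        _ = u₁ * (t.map (ι Q)).prod := by
            rw [ι_sq_scalar, Algebra.smul_def, ← map_mul, inv_mul_cancel₀ hc, map_one, mul_one]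
        _ = 1 := hu2
    · simp only [List.map_cons, List.prod_cons, map_mul, involute_ι]
      calc -ι Q c * involute ((t.map (ι Q)).prod) * ι Q x * (u₁ * ((Q c)⁻¹ • ι Q c))
          = -ι Q c * (involute ((t.map (ι Q)).prod) * ι Q x * u₁) * ((Q c)⁻¹ • ι Q c) := by
            noncomm_ring
        _ = -ι Q c * ι Q x₁ * ((Q c)⁻¹ • ι Q c) := by rw [href]
        _ = ι Q (x₁ - k • c) := single_reflect c x₁ hc
    · have h1 : x - x₁ ∈ Submodule.span K {m | m ∈ c :: t} :=
        Submodule.span_mono (fun m hm => List.mem_cons_of_mem _ hm) hsp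
      have h2 : (k • c : M) ∈ Submodule.span K {m | m ∈ c :: t} :=
        Submodule.smul_mem _ _ (Submodule.subset_span (List.mem_cons_self : c ∈ c :: t))
      have := Submodule.add_mem _ h1 h2
      convert this using 1
      abel
    · intro m hm
      rcases List.mem_cons.mp hm with rfl | hm'
      · have hxx : QuadraticMap.polar Q m x = QuadraticMap.polar Q m x₁ := by
          have hker : Submodule.span K {n | n ∈ t} ≤
              LinearMap.ker (QuadraticMap.polarBilin Q m) := by
            rw [Submodule.span_le]
            intro n hn
            simpa using hcort n hn
          have h0 : QuadraticMap.polarBilin Q m (x - x₁) = 0 := hker hsp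
          rw [map_sub, sub_eq_zero] at h0
          simpa using h0
        have hcc : QuadraticMap.polar Q m m = 2 * Q m := by
          rw [QuadraticMap.polar_self, nsmul_eq_mul]
          norm_num
        rw [show x + (x₁ - k • m) = x + x₁ - k • m by abel,
          QuadraticMap.polar_sub_right, QuadraticMap.polar_add_right,
          QuadraticMap.polar_smul_right, hxx, hcc, hk]
        field_simp
        rw [smul_eq_mul, ← mul_assoc, div_mul_cancel₀ _ hc]
        ring
      · have h1 : QuadraticMap.polar Q m (x + x₁) = 0 := hor m hm'
        have h2 : QuadraticMap.polar Q m c = 0 := by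
          rw [QuadraticMap.polar_comm]; exact hcort m hm'
        rw [show x + (x₁ - k • c) = (x + x₁) - k • c by abel,
          QuadraticMap.polar_sub_right, h1, QuadraticMap.polar_smul_right, h2]
        simp

end Aux

/-- The inverse projection operator `P_A(X) = (1/2)·(X - α(A)·X·A⁻¹)` for invertible `A`. -/
noncomputable def invProj {K M : Type*} [Field K] [Invertible (2 : K)]
    [AddCommGroup M] [Module K M] {Q : QuadraticForm K M}
    (A : CliffordAlgebra Q) [Invertible A] (X : CliffordAlgebra Q) : CliffordAlgebra Q :=
  ⅟(2 : K) • (X - involute A * X * ⅟A)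

/-- If the span of the blade `A` is contained in that of the blade `B` (so `A·B = A ⌟ B`), then `P_{A·B}(x) = P_B(x) - P_A(x)` for every vector `x`. -/
theorem invProj_mul_eq_sub {K M : Type*} [Field K] [Invertible (2 : K)]
    [AddCommGroup M] [Module K M] {Q : QuadraticForm K M}
    {r s : ℕ} (a : Fin r → M) (b : Fin s → M)
    (A B : CliffordAlgebra Q) [Invertible A] [Invertible B]
    (hA : A = (List.ofFn fun i => ι Q (a i)).prod)
    (hB : B = (List.ofFn fun j => ι Q (b j)).prod)
    (ha : ∀ i j, i ≠ j → QuadraticMap.polar Q (a i) (a j) = 0)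
    (hb : ∀ i j, i ≠ j → QuadraticMap.polar Q (b i) (b j) = 0)
    (haQ : ∀ i, Q (a i) ≠ 0) (hbQ : ∀ j, Q (b j) ≠ 0)
    (hspan : Submodule.span K (Set.range a) ≤ Submodule.span K (Set.range b))
    (x : M) :
    letI : Invertible (A * B) := invertibleMul A B
    invProj (A * B) (ι Q x) = invProj B (ι Q x) - invProj A (ι Q x) := by
  letI : Invertible (A * B) := invertibleMul A B
  have hA' : A = ((List.ofFn a).map (ι Q)).prod := by rw [hA, List.map_ofFn]; rfl
  have hB' : B = ((List.ofFn b).map (ι Q)).prod := by rw [hB, List.map_ofFn]; rfl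
  obtain ⟨x', u, hu1, hu2, href, hsp', hor⟩ :=
    blade_reflect (Q := Q) (List.ofFn b)
      (List.pairwise_ofFn.mpr fun i j hij => hb i j hij.ne)
      (by intro m hm; obtain ⟨j, rfl⟩ := List.mem_ofFn.mp hm; exact hbQ j) x
  have hinvB : (⅟B : CliffordAlgebra Q) = u := invOf_eq_right_inv (hB' ▸ hu1)
  have hBrefl : involute B * ι Q x * ⅟B = ι Q x' := by
    rw [hinvB, hB']; exact href
  -- `x + x'` is orthogonal to every `a i`
  have hva : ∀ i, QuadraticMap.polar Q (a i) (x + x') = 0 := by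
    have hker : Submodule.span K (Set.range b) ≤
        LinearMap.ker ((QuadraticMap.polarBilin Q).flip (x + x')) := by
      rw [Submodule.span_le]
      rintro _ ⟨j, rfl⟩
      have := hor (b j) (List.mem_ofFn.mpr ⟨j, rfl⟩)
      simpa using this
    intro i
    have hai : a i ∈ Submodule.span K (Set.range b) :=
      hspan (Submodule.subset_span ⟨i, rfl⟩)
    simpa using hker hai
  have hfix : involute A * ι Q (x + x') = ι Q (x + x') * A := by
    rw [hA']
    refine involute_prod_mul_ι _ _ ?_
    intro m hm
    obtain ⟨i, rfl⟩ := List.mem_ofFn.mp hm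
    exact hva i
  have hAfix : involute A * ι Q (x + x') * ⅟A = ι Q (x + x') := by
    rw [hfix]
    exact mul_invOf_cancel_right _ _
  rw [map_add] at hAfix
  have hadd : involute A * ι Q x * ⅟A + involute A * ι Q x' * ⅟A = ι Q x + ι Q x' := by
    calc involute A * ι Q x * ⅟A + involute A * ι Q x' * ⅟A
        = involute A * (ι Q x + ι Q x') * ⅟A := by noncomm_ring
      _ = ι Q x + ι Q x' := hAfix
  have hA2 : involute A * ι Q x' * ⅟A
      = ι Q x + ι Q x' - involute A * ι Q x * ⅟A := eq_sub_of_add_eq' hadd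
  have hkey : involute (A * B) * ι Q x * ⅟(A * B)
      = ι Q x + ι Q x' - involute A * ι Q x * ⅟A := by
    rw [invOf_mul, map_mul]
    have hassoc : involute A * involute B * ι Q x * (⅟B * ⅟A)
        = involute A * (involute B * ι Q x * ⅟B) * ⅟A := by noncomm_ring
    rw [hassoc, hBrefl, hA2]
  simp only [invProj]
  rw [hkey, hBrefl]
  module
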